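/- Let A be a symmetric positive definite symplectic 2n×2n real matrix partitioned into n×n blocks A = [[A11, A12], [A12ᵀ, A22]], let A11 = L11·L11ᵀ be the Cholesky decomposition of A11 (L11 lower triangular with positive diagonal entries), and let S = A22 − A12ᵀ·A11⁻¹·A12 be the Schur complement of A11 in A. If S = U·Uᵀ is the Reverse Cholesky decomposition of S (U upper triangular with positive diagonal entries), then U = (L11⁻¹)ᵀ. -/

import Mathlib

open Matrix

private lemma diag_mul_tri {n : ℕ} (P Q : Matrix (Fin n) (Fin n) ℝ)
    (hP : P.BlockTriangular id) (hQ : Q.BlockTriangular id) (i : Fin n) :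
    (P * Q) i i = P i i * Q i i := by
  rw [Matrix.mul_apply]
  apply Finset.sum_eq_single i
  · intro k _ hk
    rcases lt_or_gt_of_ne hk with h | h
    · rw [hP h, zero_mul]
    · rw [hQ h, mul_zero]
  · simp

/-- The standard symplectic matrix `J = [[0, I], [-I, 0]]`. -/
noncomputable def symplJ (n : ℕ) : Matrix (Fin n ⊕ Fin n) (Fin n ⊕ Fin n) ℝ :=
  Matrix.fromBlocks 0 1 (-1) 0

/-- If `A = [[A11, A12], [A12ᵀ, A22]]` is symmetric positive definite symplectic,
`A11 = L11 L11ᵀ` is the Cholesky decomposition of `A11`, and `S = U Uᵀ` is the Reverse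
Cholesky decomposition of the Schur complement `S = A22 − A12ᵀ A11⁻¹ A12`, then
`U = (L11⁻¹)ᵀ`. -/
theorem reverse_cholesky_of_schur_complement (n : ℕ)
    (A11 A12 A22 : Matrix (Fin n) (Fin n) ℝ)
    (A : Matrix (Fin n ⊕ Fin n) (Fin n ⊕ Fin n) ℝ)
    (hA : A = Matrix.fromBlocks A11 A12 A12ᵀ A22)
    (hsym : Aᵀ = A) (hpd : A.PosDef)
    (hsympl : Aᵀ * symplJ n * A = symplJ n)
    (L11 : Matrix (Fin n) (Fin n) ℝ)
    (hL11tri : ∀ i j : Fin n, i < j → L11 i j = 0)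
    (hL11diag : ∀ i : Fin n, 0 < L11 i i)
    (hChol : A11 = L11 * L11ᵀ)
    (S : Matrix (Fin n) (Fin n) ℝ)
    (hS : S = A22 - A12ᵀ * A11⁻¹ * A12)
    (U : Matrix (Fin n) (Fin n) ℝ)
    (hUtri : ∀ i j : Fin n, j < i → U i j = 0)
    (hUdiag : ∀ i : Fin n, 0 < U i i)
    (hRevChol : S = U * Uᵀ) :
    U = (L11⁻¹)ᵀ := by
  have hLTtri : (L11ᵀ).BlockTriangular id := fun i j h => hL11tri j i h
  have hUtri' : U.BlockTriangular id := fun i j h => hUtri i j h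
  -- L11 is invertible
  have hdetL : L11.det ≠ 0 := by
    rw [← Matrix.det_transpose, Matrix.det_of_upperTriangular hLTtri]
    exact ne_of_gt (Finset.prod_pos fun i _ => by simpa using hL11diag i)
  haveI : Invertible L11 := L11.invertibleOfIsUnitDet (isUnit_iff_ne_zero.mpr hdetL)
  haveI : Invertible (L11ᵀ) := L11.transpose.invertibleOfIsUnitDet
    (by rw [Matrix.det_transpose]; exact isUnit_iff_ne_zero.mpr hdetL)
  haveI : Invertible A11 := by rw [hChol]; exact invertibleMul _ _
  -- the matrix V := (L11⁻¹)ᵀ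
  set V : Matrix (Fin n) (Fin n) ℝ := (L11⁻¹)ᵀ with hV
  have hVeq : V = (L11ᵀ)⁻¹ := Matrix.transpose_nonsing_inv L11
  have hVtri : V.BlockTriangular id := by
    rw [hVeq]; exact Matrix.blockTriangular_inv_of_blockTriangular hLTtri
  have hVL : V * L11ᵀ = 1 := by rw [hVeq]; exact Matrix.inv_mul_of_invertible _
  have hVdiag : ∀ i, 0 < V i i := by
    intro i
    have h := diag_mul_tri V L11ᵀ hVtri hLTtri i
    rw [hVL] at h
    simp only [Matrix.one_apply_eq, Matrix.transpose_apply] at h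
    nlinarith [hL11diag i]
  have hdetV : V.det ≠ 0 := by
    rw [Matrix.det_of_upperTriangular hVtri]
    exact ne_of_gt (Finset.prod_pos fun i _ => hVdiag i)
  haveI : Invertible V := V.invertibleOfIsUnitDet (isUnit_iff_ne_zero.mpr hdetV)
  haveI : Invertible (Vᵀ) := (Vᵀ).invertibleOfIsUnitDet
    (by rw [Matrix.det_transpose]; exact isUnit_iff_ne_zero.mpr hdetV)
  -- extract block equations from the symplectic condition
  rw [hsym, hA] at hsympl
  have hJ : symplJ n = Matrix.fromBlocks 0 1 (-1 : Matrix (Fin n) (Fin n) ℝ) 0 := rfl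
  rw [hJ, Matrix.fromBlocks_multiply, Matrix.fromBlocks_multiply] at hsympl
  have e1 : A11 * A12ᵀ = A12 * A11 := by
    have h := congrArg Matrix.toBlocks₁₁ hsympl
    simp only [Matrix.toBlocks_fromBlocks₁₁, mul_zero, mul_one, mul_neg, neg_mul, zero_add,
      add_zero, zero_mul] at h
    linear_combination (norm := noncomm_ring) h
  have e2 : A11 * A22 = 1 + A12 * A12 := by
    have h := congrArg Matrix.toBlocks₁₂ hsympl
    simp only [Matrix.toBlocks_fromBlocks₁₂, mul_zero, mul_one, mul_neg, neg_mul, zero_add,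
      add_zero, zero_mul] at h
    linear_combination (norm := noncomm_ring) h
  -- S = A11⁻¹
  have hA22 : A22 = A11⁻¹ + A11⁻¹ * (A12 * A12) := by
    have h := congrArg (fun X => A11⁻¹ * X) e2
    rw [Matrix.inv_mul_cancel_left_of_invertible, Matrix.mul_add, Matrix.mul_one] at h
    exact h
  have hcomm : A12ᵀ * A11⁻¹ = A11⁻¹ * A12 := by
    have h : A12ᵀ = A11⁻¹ * A12 * A11 := by
      rw [Matrix.mul_assoc, ← e1, Matrix.inv_mul_cancel_left_of_invertible]
    rw [h, Matrix.mul_inv_cancel_right_of_invertible]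
  have hSinv : S = A11⁻¹ := by
    rw [hS, hA22, hcomm, ← Matrix.mul_assoc]
    abel
  -- U Uᵀ = V Vᵀ
  have hVVT : V * Vᵀ = A11⁻¹ := by
    rw [hChol, Matrix.mul_inv_rev, ← hVeq, hV, Matrix.transpose_transpose]
  have hUUT : U * Uᵀ = V * Vᵀ := by rw [← hRevChol, hSinv, hVVT]
  -- the orthogonal upper-triangular matrix M := V⁻¹ * U
  set M : Matrix (Fin n) (Fin n) ℝ := V⁻¹ * U with hM
  have hVinvtri : (V⁻¹).BlockTriangular id :=
    Matrix.blockTriangular_inv_of_blockTriangular hVtri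
  have hMtri : M.BlockTriangular id := hVinvtri.mul hUtri'
  have hMMT : M * Mᵀ = 1 := by
    rw [hM, Matrix.transpose_mul, Matrix.transpose_nonsing_inv]
    calc V⁻¹ * U * (Uᵀ * Vᵀ⁻¹) = V⁻¹ * (U * Uᵀ) * Vᵀ⁻¹ := by
          simp only [Matrix.mul_assoc]
      _ = V⁻¹ * V * (Vᵀ * Vᵀ⁻¹) := by rw [hUUT]; simp only [Matrix.mul_assoc]
      _ = 1 := by
          rw [Matrix.inv_mul_of_invertible, Matrix.mul_inv_of_invertible, Matrix.one_mul]
  haveI : Invertible M := invertibleOfRightInverse M _ hMMT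
  have hMTtri : (Mᵀ).BlockTriangular id := by
    rw [← Matrix.inv_eq_right_inv hMMT]
    exact Matrix.blockTriangular_inv_of_blockTriangular hMtri
  have hMdiag : ∀ i, 0 < M i i := by
    intro i
    have h1 := diag_mul_tri V⁻¹ V hVinvtri hVtri i
    rw [Matrix.inv_mul_of_invertible] at h1
    simp only [Matrix.one_apply_eq] at h1
    have h2 : 0 < V⁻¹ i i := by nlinarith [hVdiag i]
    have h3 := diag_mul_tri V⁻¹ U hVinvtri hUtri' i
    rw [← hM] at h3
    rw [h3]
    exact mul_pos h2 (hUdiag i)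
  have hMone : M = 1 := by
    ext i j
    rcases lt_trichotomy i j with h | h | h
    · have h0 : Mᵀ j i = 0 := hMTtri h
      rw [Matrix.transpose_apply] at h0
      rw [h0, Matrix.one_apply_ne (ne_of_lt h)]
    · subst h
      have h1 := diag_mul_tri M Mᵀ hMtri hMTtri i
      rw [hMMT] at h1
      simp only [Matrix.one_apply_eq, Matrix.transpose_apply] at h1
      have := hMdiag i
      have : M i i = 1 := by nlinarith
      rw [this, Matrix.one_apply_eq]
    · rw [hMtri h, Matrix.one_apply_ne (ne_of_gt h)]
  have : V * M = U := by rw [hM, Matrix.mul_inv_cancel_left_of_invertible]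
  rw [← this, hMone, Matrix.mul_one]
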